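/- Let canon(x,y) denote the canonical alignment of x and y, defined as the optimal spanning path of Grid(x,y) that is lexicographically maximum with respect to its sequence of edge types ordered by vertical > diagonal > horizontal. If a box I×J is compatible with canon(x,y), then the restriction of canon(x,y) to I×J equals the canonical alignment of the subgrid Grid_{I×J}(x,y). -/

import Mathlib

/-- A single step in the edit-distance grid: horizontal, vertical, or diagonal. -/
def GridStep (p q : ℕ × ℕ) : Prop :=
  (q.1 = p.1 + 1 ∧ q.2 = p.2) ∨ (q.1 = p.1 ∧ q.2 = p.2 + 1) ∨
    (q.1 = p.1 + 1 ∧ q.2 = p.2 + 1)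

/-- The list of (directed) edges of a path given as a list of vertices. -/
def pathEdges (P : List (ℕ × ℕ)) : List ((ℕ × ℕ) × (ℕ × ℕ)) := P.zip P.tail

/-- A spanning path (alignment) of `Grid(x,y)`. -/
def IsSpanningPath (m n : ℕ) (P : List (ℕ × ℕ)) : Prop :=
  P.head? = some (0, 0) ∧ P.getLast? = some (m, n) ∧ P.Chain' GridStep

/-- An edge is costly unless it is a diagonal edge `(i,j) → (i+1,j+1)` with
`x_{i+1} = y_{j+1}`. -/
def IsCostly {α : Type*} (x y : List α) (e : (ℕ × ℕ) × (ℕ × ℕ)) : Prop :=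
  ¬ (e.2.1 = e.1.1 + 1 ∧ e.2.2 = e.1.2 + 1 ∧ x[e.1.1]? = y[e.1.2]?)

instance {α : Type*} [DecidableEq α] (x y : List α) (e : (ℕ × ℕ) × (ℕ × ℕ)) :
    Decidable (IsCostly x y e) := by unfold IsCostly; infer_instance

/-- The cost of a path: its number of costly edges. -/
def pathCost {α : Type*} [DecidableEq α] (x y : List α) (P : List (ℕ × ℕ)) : ℕ :=
  (pathEdges P).countP (fun e => decide (IsCostly x y e))

/-- The type of an edge, encoded so that `vertical (2) > diagonal (1) > horizontal (0)`. -/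
def edgeType (e : (ℕ × ℕ) × (ℕ × ℕ)) : ℕ :=
  if e.2.1 = e.1.1 ∧ e.2.2 = e.1.2 + 1 then 2
  else if e.2.1 = e.1.1 + 1 ∧ e.2.2 = e.1.2 + 1 then 1
  else 0

/-- The sequence of edge types of a path. -/
def typeSeq (P : List (ℕ × ℕ)) : List ℕ := (pathEdges P).map edgeType

/-- `P` is the canonical alignment of `x` and `y`: an optimal (minimum-cost) spanning
path whose type sequence is lexicographically maximum (w.r.t. vertical > diagonal >
horizontal) among optimal spanning paths. -/
def IsCanonical {α : Type*} [DecidableEq α] (x y : List α) (P : List (ℕ × ℕ)) : Prop :=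
  IsSpanningPath x.length y.length P ∧
  (∀ Q, IsSpanningPath x.length y.length Q → pathCost x y P ≤ pathCost x y Q) ∧
  (∀ Q, IsSpanningPath x.length y.length Q → pathCost x y Q = pathCost x y P →
    typeSeq Q = typeSeq P ∨ List.Lex (· < ·) (typeSeq Q) (typeSeq P))

/-- The restriction of a path `P` to the box `(a,b] × (c,d]`, shifted so that it becomes
a path of the grid of the substrings `x_{(a,b]}` and `y_{(c,d]}`. -/
def restrictShift (a b c d : ℕ) (P : List (ℕ × ℕ)) : List (ℕ × ℕ) :=
  (P.filter (fun p => decide (a ≤ p.1 ∧ p.1 ≤ b ∧ c ≤ p.2 ∧ p.2 ≤ d))).map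
    (fun p => (p.1 - a, p.2 - c))

namespace CanonRestr

/-- transitive companion of `GridStep`. -/
def Rel (p q : ℕ × ℕ) : Prop := p.1 ≤ q.1 ∧ p.2 ≤ q.2 ∧ p.1 + p.2 < q.1 + q.2

instance : IsTrans (ℕ × ℕ) Rel := ⟨fun _ _ _ h h' => by unfold Rel at *; omega⟩

lemma gridStep_rel {p q : ℕ × ℕ} (h : GridStep p q) : Rel p q := by
  unfold GridStep at h; unfold Rel; omega

lemma pairwise_rel {P : List (ℕ × ℕ)} (h : P.Chain' GridStep) : P.Pairwise Rel :=
  List.isChain_iff_pairwise.1 (h.imp fun _ _ hs => gridStep_rel hs)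

/-- connector edges -/
def conn (u? v? : Option (ℕ × ℕ)) : List ((ℕ × ℕ) × (ℕ × ℕ)) :=
  match u?, v? with
  | some u, some v => [(u, v)]
  | _, _ => []

@[simp] lemma conn_none_left (v? : Option (ℕ × ℕ)) : conn none v? = [] := by
  cases v? <;> rfl

@[simp] lemma conn_none_right (u? : Option (ℕ × ℕ)) : conn u? none = [] := by
  cases u? <;> rfl

@[simp] lemma conn_some_some (u v : ℕ × ℕ) : conn (some u) (some v) = [(u, v)] := rfl

@[simp] lemma pathEdges_nil : pathEdges [] = [] := rfl
@[simp] lemma pathEdges_single (a : ℕ × ℕ) : pathEdges [a] = [] := rfl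
@[simp] lemma pathEdges_cons_cons (a b : ℕ × ℕ) (l : List (ℕ × ℕ)) :
    pathEdges (a :: b :: l) = (a, b) :: pathEdges (b :: l) := rfl

lemma pathEdges_append (l₁ l₂ : List (ℕ × ℕ)) :
    pathEdges (l₁ ++ l₂) = pathEdges l₁ ++ conn l₁.getLast? l₂.head? ++ pathEdges l₂ := by
  induction l₁ with
  | nil => simp
  | cons a t ih =>
    cases t with
    | nil =>
      cases l₂ with
      | nil => simp
      | cons w t₂ => simp [pathEdges]
    | cons b t =>
      have : a :: b :: t ++ l₂ = a :: b :: (t ++ l₂) := rfl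
      have h2 : (b :: t) ++ l₂ = b :: (t ++ l₂) := by simp
      rw [this, pathEdges_cons_cons, ← h2, ih]
      simp [List.getLast?_cons_cons]

lemma pathEdges_map (f : ℕ × ℕ → ℕ × ℕ) (l : List (ℕ × ℕ)) :
    pathEdges (l.map f) = (pathEdges l).map (Prod.map f f) := by
  unfold pathEdges
  rw [← List.map_tail, List.zip_map]

lemma mem_pathEdges {e : (ℕ × ℕ) × (ℕ × ℕ)} {l : List (ℕ × ℕ)} (h : e ∈ pathEdges l) :
    e.1 ∈ l ∧ e.2 ∈ l := by
  obtain ⟨h1, h2⟩ := List.of_mem_zip (a := e.1) (b := e.2) (by simpa [pathEdges] using h)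
  exact ⟨h1, List.mem_of_mem_tail h2⟩

/-- weight of a step type: total displacement. -/
def w (n : ℕ) : ℕ := if n = 1 then 2 else 1

lemma w_pos (n : ℕ) : 1 ≤ w n := by unfold w; split <;> omega

lemma w_edgeType {p q : ℕ × ℕ} (h : GridStep p q) :
    w (edgeType (p, q)) + p.1 + p.2 = q.1 + q.2 := by
  rcases p with ⟨p1, p2⟩; rcases q with ⟨q1, q2⟩
  rcases h with ⟨h1, h2⟩ | ⟨h1, h2⟩ | ⟨h1, h2⟩ <;>
    simp_all [edgeType, w] <;> omega

lemma disp_sum : ∀ {l : List (ℕ × ℕ)}, l.Chain' GridStep →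
    ∀ u ∈ l.head?, ∀ v ∈ l.getLast?, ((typeSeq l).map w).sum + u.1 + u.2 = v.1 + v.2
  | [], _, u, hu, v, hv => by simp at hu
  | [a], _, u, hu, v, hv => by
      simp at hu hv; subst hu; subst hv; simp [typeSeq]
  | a :: b :: t, h, u, hu, v, hv => by
      simp only [List.Chain', List.isChain_cons_cons] at h
      have ih := disp_sum h.2 b (by simp) v (by simpa using hv)
      simp only [List.head?_cons, Option.mem_def, Option.some.injEq] at hu
      subst hu
      have hw := w_edgeType h.1
      simp only [typeSeq, pathEdges_cons_cons, List.map_cons, List.sum_cons]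
      simp only [typeSeq] at ih
      omega

lemma prefix_eq {s t : List ℕ} (h : s <+: t)
    (hsum : (s.map w).sum = (t.map w).sum) : s = t := by
  obtain ⟨u, rfl⟩ := h
  cases u with
  | nil => simp
  | cons a u =>
    exfalso
    rw [List.map_append, List.sum_append, List.map_cons, List.sum_cons] at hsum
    have := w_pos a
    omega

-- continuing namespace CanonRestr (appended to aux.lean for testing)

lemma lex_strip {A s t : List ℕ} (h : List.Lex (· < ·) (A ++ s) (A ++ t)) :
    List.Lex (· < ·) s t := by
  induction A with
  | nil => exact h
  | cons a A ih => exact ih ((List.cons_lex_cons_iff.1 h).resolve_left (lt_irrefl a)).2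

lemma lex_append_reduce : ∀ {s t : List ℕ}, (s <+: t → s = t) → (t <+: s → s = t) →
    ∀ {T : List ℕ}, List.Lex (· < ·) (s ++ T) (t ++ T) →
    s = t ∨ List.Lex (· < ·) s t
  | [], [], _, _, _, _ => Or.inl rfl
  | [], b :: t, _, _, _, _ => Or.inr List.Lex.nil
  | a :: s, [], _, ht, _, _ => absurd (ht (List.nil_prefix)) (by simp)
  | a :: s, b :: t, hs, ht, T, h => by
    cases h with
    | cons h' =>
      rcases lex_append_reduce (s := s) (t := t)
          (fun hp => by simpa using hs (List.cons_prefix_cons.2 ⟨rfl, hp⟩))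
          (fun hp => by simpa using ht (List.cons_prefix_cons.2 ⟨rfl, hp⟩)) h' with
        heq | hlex
      · exact Or.inl (by rw [heq])
      · exact Or.inr (List.Lex.cons hlex)
    | rel hab => exact Or.inr (List.Lex.rel hab)

lemma edgeType_shift (p q : ℕ × ℕ) (a c : ℕ) :
    edgeType ((p.1 + a, p.2 + c), (q.1 + a, q.2 + c)) = edgeType (p, q) := by
  rcases p with ⟨p1, p2⟩; rcases q with ⟨q1, q2⟩
  dsimp only [edgeType]
  split_ifs <;> omega

lemma typeSeq_unshift (a c : ℕ) (N : List (ℕ × ℕ)) :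
    typeSeq (N.map (fun r => (r.1 + a, r.2 + c))) = typeSeq N := by
  unfold typeSeq
  rw [pathEdges_map, List.map_map]
  refine List.map_congr_left fun e _ => ?_
  rcases e with ⟨p, q⟩
  exact edgeType_shift p q a c

lemma costly_shift {α : Type*} (x y : List α) (a b c d : ℕ) (p q : ℕ × ℕ)
    (hq1 : q.1 ≤ b - a) (hq2 : q.2 ≤ d - c) :
    IsCostly x y ((p.1 + a, p.2 + c), (q.1 + a, q.2 + c)) ↔
      IsCostly ((x.drop a).take (b - a)) ((y.drop c).take (d - c)) (p, q) := by
  by_cases hd : q.1 = p.1 + 1 ∧ q.2 = p.2 + 1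
  · have hx : ((x.drop a).take (b - a))[p.1]? = x[p.1 + a]? := by
      rw [List.getElem?_take, if_pos (by omega), List.getElem?_drop, Nat.add_comm]
    have hy : ((y.drop c).take (d - c))[p.2]? = y[p.2 + c]? := by
      rw [List.getElem?_take, if_pos (by omega), List.getElem?_drop, Nat.add_comm]
    unfold IsCostly
    dsimp only
    rw [hx, hy]
    exact not_congr ⟨fun ⟨h1, h2, h3⟩ => ⟨by omega, by omega, h3⟩,
      fun ⟨h1, h2, h3⟩ => ⟨by omega, by omega, h3⟩⟩
  · unfold IsCostly
    dsimp only
    constructor <;> intro _ <;> rintro ⟨h1, h2, -⟩ <;> exact hd ⟨by omega, by omega⟩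

lemma cost_unshift {α : Type*} [DecidableEq α] (x y : List α) (a b c d : ℕ)
    (N : List (ℕ × ℕ)) (hbound : ∀ p ∈ N, p.1 ≤ b - a ∧ p.2 ≤ d - c) :
    pathCost x y (N.map (fun r => (r.1 + a, r.2 + c))) =
      pathCost ((x.drop a).take (b - a)) ((y.drop c).take (d - c)) N := by
  unfold pathCost
  rw [pathEdges_map, List.countP_map]
  refine List.countP_congr fun e he => ?_
  rcases e with ⟨p, q⟩
  have hq := (mem_pathEdges he).2
  simp only [Function.comp, decide_eq_true_eq, Prod.map]
  exact costly_shift x y a b c d p q (hbound q hq).1 (hbound q hq).2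

lemma chain'_unshift {a c : ℕ} {N : List (ℕ × ℕ)} (h : N.Chain' GridStep) :
    (N.map (fun r => (r.1 + a, r.2 + c))).Chain' GridStep := by
  simp only [List.Chain', List.isChain_map]
  refine h.imp fun p q hs => ?_
  unfold GridStep at *
  dsimp only
  omega

lemma chain'_shift {a c : ℕ} : ∀ {M : List (ℕ × ℕ)}, M.Chain' GridStep →
    (∀ p ∈ M, a ≤ p.1 ∧ c ≤ p.2) →
    (M.map (fun p => (p.1 - a, p.2 - c))).Chain' GridStep
  | [], _, _ => by simp [List.Chain', List.isChain_nil]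
  | [p], _, _ => by simp [List.Chain', List.isChain_singleton]
  | p :: q :: t, h, hb => by
    simp only [List.Chain', List.isChain_cons_cons] at h
    have hp := hb p (by simp)
    have hq := hb q (by simp)
    simp only [List.map_cons]
    simp only [List.Chain', List.isChain_cons_cons]
    constructor
    · have := h.1; unfold GridStep at *; dsimp only; omega
    · have := chain'_shift (a := a) (c := c) h.2 (fun r hr => hb r (List.mem_cons_of_mem _ hr))
      simpa [List.Chain'] using this

lemma le_last : ∀ {l : List (ℕ × ℕ)}, l.Chain' GridStep → ∀ v ∈ l.getLast?,
    ∀ p ∈ l, p.1 ≤ v.1 ∧ p.2 ≤ v.2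
  | [], _, v, hv, p, hp => by simp at hp
  | [u], _, v, hv, p, hp => by
    simp at hv hp; subst hv; subst hp; exact ⟨le_refl _, le_refl _⟩
  | u :: w :: t, h, v, hv, p, hp => by
    simp only [List.Chain', List.isChain_cons_cons] at h
    have ih := le_last h.2 v (by simpa using hv)
    rcases List.mem_cons.1 hp with rfl | hp'
    · have hw := ih w (by simp)
      have := gridStep_rel h.1
      unfold Rel at this
      omega
    · exact ih p hp'

lemma ge_head : ∀ {l : List (ℕ × ℕ)}, l.Chain' GridStep → ∀ u ∈ l.head?,
    ∀ p ∈ l, u.1 ≤ p.1 ∧ u.2 ≤ p.2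
  | [], _, u, hu, p, hp => by simp at hp
  | [a], _, u, hu, p, hp => by
    simp at hu hp; subst hu; subst hp; exact ⟨le_refl _, le_refl _⟩
  | a :: b :: t, h, u, hu, p, hp => by
    simp only [List.Chain', List.isChain_cons_cons] at h
    simp only [List.head?_cons, Option.mem_def, Option.some.injEq] at hu
    subst hu
    rcases List.mem_cons.1 hp with rfl | hp'
    · exact ⟨le_refl _, le_refl _⟩
    · have ih := ge_head h.2 b (by simp) p hp'
      have := gridStep_rel h.1
      unfold Rel at this
      omega

lemma pathEdges_splice (A B l : List (ℕ × ℕ)) :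
    pathEdges (A ++ (l ++ B)) =
      (pathEdges A ++ conn A.getLast? (l.head?.or B.head?)) ++
        (pathEdges l ++ (conn l.getLast? B.head? ++ pathEdges B)) := by
  rw [pathEdges_append, pathEdges_append, List.head?_append]
  simp [List.append_assoc]

end CanonRestr


open CanonRestr

/-- If a box `(a,b] × (c,d]` is compatible with the canonical alignment of `x` and `y`
(the canonical alignment passes through `(a,c)` and `(b,d)`), then its restriction to
the box equals the canonical alignment of the corresponding subgrid, i.e. it is the
canonical alignment of the substrings `x_{(a,b]}` and `y_{(c,d]}`. -/
theorem canonical_restriction {α : Type*} [DecidableEq α] (x y : List α)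
    (P : List (ℕ × ℕ)) (hP : IsCanonical x y P)
    (a b c d : ℕ) (hab : a ≤ b) (hbx : b ≤ x.length) (hcd : c ≤ d) (hdy : d ≤ y.length)
    (hmem1 : (a, c) ∈ P) (hmem2 : (b, d) ∈ P) :
    IsCanonical ((x.drop a).take (b - a)) ((y.drop c).take (d - c))
      (restrictShift a b c d P) := by
  obtain ⟨⟨hPhead, hPlast, hPchain⟩, hopt, hlex⟩ := hP
  set x' : List α := (x.drop a).take (b - a) with hx'
  set y' : List α := (y.drop c).take (d - c) with hy'
  have hx'len : x'.length = b - a := by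
    rw [hx']; rw [List.length_take, List.length_drop]; omega
  have hy'len : y'.length = d - c := by
    rw [hy']; rw [List.length_take, List.length_drop]; omega
  -- decomposition of P
  obtain ⟨A, P₁, hP1⟩ := List.append_of_mem hmem1
  have hpw : P.Pairwise Rel := pairwise_rel hPchain
  have hbd' : (b, d) ∈ (a, c) :: P₁ := by
    rcases List.mem_append.1 (by rw [← hP1]; exact hmem2) with h | h
    · exfalso
      have hr := (List.pairwise_append.1 (by rw [hP1] at hpw; exact hpw)).2.2
          _ h (a, c) (by simp)
      unfold CanonRestr.Rel at hr
      dsimp at hr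
      omega
    · exact h
  obtain ⟨M₀, B, hM0⟩ := List.append_of_mem hbd'
  set M : List (ℕ × ℕ) := M₀ ++ [(b, d)] with hMdef
  have hMB : M ++ B = (a, c) :: P₁ := by rw [hM0]; simp [hMdef]
  have hPdecomp : P = A ++ (M ++ B) := by rw [hP1, hMB]
  have hMhead : M.head? = some (a, c) := by
    have h1 : (M ++ B).head? = some (a, c) := by rw [hMB]; rfl
    rw [List.head?_append] at h1
    cases hM : M.head? with
    | none =>
      exfalso
      rw [List.head?_eq_none_iff] at hM
      simp [hMdef] at hM
    | some u => rw [hM] at h1; simpa using h1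
  have hMlast : M.getLast? = some (b, d) := List.getLast?_concat
  have hMchain : M.Chain' GridStep := by
    have hc := hPdecomp ▸ hPchain
    exact (List.isChain_append.1 (List.isChain_append.1 hc).2.1).1
  have hMbounds : ∀ p ∈ M, a ≤ p.1 ∧ p.1 ≤ b ∧ c ≤ p.2 ∧ p.2 ≤ d := by
    intro p hp
    have h1 := ge_head hMchain (a, c) (Option.mem_def.2 hMhead) p hp
    have h2 := le_last hMchain (b, d) (Option.mem_def.2 hMlast) p hp
    dsimp at h1 h2
    exact ⟨h1.1, h2.1, h1.2, h2.2⟩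
  -- pairwise facts for A and B
  have hpw' : (A ++ (M ++ B)).Pairwise Rel := hPdecomp ▸ hpw
  obtain ⟨-, hpw2, hAall⟩ := List.pairwise_append.1 hpw'
  obtain ⟨-, -, hMBall⟩ := List.pairwise_append.1 hpw2
  -- the filter is M
  have hfilter : P.filter (fun p => decide (a ≤ p.1 ∧ p.1 ≤ b ∧ c ≤ p.2 ∧ p.2 ≤ d)) = M := by
    rw [hPdecomp, List.filter_append, List.filter_append]
    have hA : A.filter (fun p => decide (a ≤ p.1 ∧ p.1 ≤ b ∧ c ≤ p.2 ∧ p.2 ≤ d)) = [] := by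
      refine List.filter_eq_nil_iff.2 fun p hp => ?_
      have hr := hAall p hp (a, c) (by rw [hMB]; exact List.mem_cons_self)
      unfold CanonRestr.Rel at hr
      dsimp at hr
      simp only [decide_eq_true_eq]
      omega
    have hBf : B.filter (fun p => decide (a ≤ p.1 ∧ p.1 ≤ b ∧ c ≤ p.2 ∧ p.2 ≤ d)) = [] := by
      refine List.filter_eq_nil_iff.2 fun p hp => ?_
      have hr := hMBall (b, d) (by simp [hMdef]) p hp
      unfold CanonRestr.Rel at hr
      dsimp at hr
      simp only [decide_eq_true_eq]
      omega
    have hMf : M.filter (fun p => decide (a ≤ p.1 ∧ p.1 ≤ b ∧ c ≤ p.2 ∧ p.2 ≤ d)) = M := by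
      refine List.filter_eq_self.2 fun p hp => ?_
      simp only [decide_eq_true_eq]
      exact hMbounds p hp
    rw [hA, hBf, hMf]
    simp
  have hRst : restrictShift a b c d P = M.map (fun p => (p.1 - a, p.2 - c)) := by
    unfold restrictShift
    rw [hfilter]
  rw [hRst]
  set Rst : List (ℕ × ℕ) := M.map (fun p => (p.1 - a, p.2 - c)) with hRdef
  have hMback : Rst.map (fun r => (r.1 + a, r.2 + c)) = M := by
    rw [hRdef, List.map_map]
    conv_rhs => rw [← List.map_id M]
    refine List.map_congr_left fun p hp => ?_
    have hb' := hMbounds p hp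
    rcases p with ⟨p1, p2⟩
    dsimp at hb' ⊢
    rw [Prod.mk.injEq]
    omega
  have hRstChain : Rst.Chain' GridStep :=
    chain'_shift hMchain fun p hp => ⟨(hMbounds p hp).1, (hMbounds p hp).2.2.1⟩
  have hRsthead : Rst.head? = some (0, 0) := by
    rw [hRdef, List.head?_map, hMhead]
    simp
  have hRstlast : Rst.getLast? = some (b - a, d - c) := by
    rw [hRdef, List.getLast?_map, hMlast]
    rfl
  have hRstspan : IsSpanningPath x'.length y'.length Rst := by
    refine ⟨hRsthead, ?_, hRstChain⟩
    rw [hx'len, hy'len]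
    exact hRstlast
  have hsumR : ((typeSeq Rst).map w).sum = (b - a) + (d - c) := by
    have h1 := disp_sum hRstChain (0, 0) (Option.mem_def.2 hRsthead)
        (b - a, d - c) (Option.mem_def.2 hRstlast)
    simpa using h1
  have hTypeM : typeSeq M = typeSeq Rst := by
    have h1 := typeSeq_unshift a c Rst
    rw [hMback] at h1
    exact h1
  have hmidM : (pathEdges M).countP (fun e => decide (IsCostly x y e)) =
      pathCost x' y' Rst := by
    have hbd : ∀ p ∈ Rst, p.1 ≤ b - a ∧ p.2 ≤ d - c := by
      intro p hp
      rw [hRdef] at hp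
      obtain ⟨q, hq, rfl⟩ := List.mem_map.1 hp
      have := hMbounds q hq
      dsimp
      omega
    have h := cost_unshift x y a b c d Rst hbd
    rw [hMback, ← hx', ← hy'] at h
    exact h
  -- splicing a spanning path of the subgrid into P
  have splice : ∀ Q : List (ℕ × ℕ), IsSpanningPath x'.length y'.length Q →
      ∃ Q', IsSpanningPath x.length y.length Q' ∧
        pathCost x y Q' + pathCost x' y' Rst = pathCost x y P + pathCost x' y' Q ∧
        ∃ T₁ T₂ : List ℕ, typeSeq Q' = T₁ ++ ((typeSeq Q) ++ T₂) ∧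
          typeSeq P = T₁ ++ ((typeSeq Rst) ++ T₂) := by
    intro Q hQ
    obtain ⟨hQhead, hQlast0, hQchain⟩ := hQ
    rw [hx'len, hy'len] at hQlast0
    set Qm : List (ℕ × ℕ) := Q.map (fun r => (r.1 + a, r.2 + c)) with hQmdef
    have hQmhead : Qm.head? = some (a, c) := by
      rw [hQmdef, List.head?_map, hQhead]
      simp
    have hQmlast : Qm.getLast? = some (b, d) := by
      rw [hQmdef, List.getLast?_map, hQlast0]
      have heq : (b - a + a, d - c + c) = ((b : ℕ), (d : ℕ)) := by
        rw [Prod.mk.injEq]; omega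
      simp [heq]
    have hQmchain : Qm.Chain' GridStep := by
      rw [hQmdef]; exact chain'_unshift hQchain
    have hQbd : ∀ p ∈ Q, p.1 ≤ b - a ∧ p.2 ≤ d - c := fun p hp =>
      le_last hQchain (b - a, d - c) (Option.mem_def.2 hQlast0) p hp
    have hmidQ : (pathEdges Qm).countP (fun e => decide (IsCostly x y e)) =
        pathCost x' y' Q := by
      rw [hQmdef, hx', hy']
      exact cost_unshift x y a b c d Q hQbd
    have hTypeQ : typeSeq Qm = typeSeq Q := by
      rw [hQmdef]; exact typeSeq_unshift a c Q
    have hQE := pathEdges_splice A B Qm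
    have hPE := pathEdges_splice A B M
    rw [hQmhead, hQmlast] at hQE
    rw [hMhead, hMlast] at hPE
    refine ⟨A ++ (Qm ++ B), ⟨?_, ?_, ?_⟩, ?_, ?_⟩
    · rw [List.head?_append, List.head?_append, hQmhead]
      have h0 := hPhead
      rw [hPdecomp, List.head?_append, List.head?_append, hMhead] at h0
      exact h0
    · rw [List.getLast?_append, List.getLast?_append, hQmlast]
      have h0 := hPlast
      rw [hPdecomp, List.getLast?_append, List.getLast?_append, hMlast] at h0
      exact h0
    · have hc := hPdecomp ▸ hPchain
      simp only [List.Chain'] at hc ⊢; rw [List.isChain_append] at hc ⊢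
      obtain ⟨hA, hMBc, hj⟩ := hc
      rw [List.isChain_append] at hMBc ⊢
      obtain ⟨hMc, hBc, hj2⟩ := hMBc
      refine ⟨hA, ⟨hQmchain, hBc, ?_⟩, ?_⟩
      · rw [hQmlast]; rw [hMlast] at hj2; exact hj2
      · rw [List.head?_append, hQmhead]
        rw [List.head?_append, hMhead] at hj
        exact hj
    · -- cost equation
      rw [← hmidQ, ← hmidM]
      unfold pathCost
      rw [hPdecomp, hQE, hPE]
      simp only [List.countP_append]
      omega
    · refine ⟨(pathEdges A ++ conn A.getLast? ((some (a, c)).or B.head?)).map edgeType,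
              (conn (some (b, d)) B.head? ++ pathEdges B).map edgeType, ?_, ?_⟩
      · show (pathEdges (A ++ (Qm ++ B))).map edgeType = _
        rw [hQE]
        simp only [List.map_append]
        rw [show (pathEdges Qm).map edgeType = typeSeq Q from hTypeQ]
      · show (pathEdges P).map edgeType = _
        rw [hPdecomp, hPE]
        simp only [List.map_append]
        rw [show (pathEdges M).map edgeType = typeSeq Rst from hTypeM]
  refine ⟨hRstspan, fun Q hQ => ?_, fun Q hQ hQcost => ?_⟩
  · obtain ⟨Q', hQ'span, hQ'cost, -⟩ := splice Q hQ
    have h1 := hopt Q' hQ'span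
    omega
  · obtain ⟨Q', hQ'span, hQ'cost, T₁, T₂, hT1, hT2⟩ := splice Q hQ
    have hceq : pathCost x y Q' = pathCost x y P := by omega
    have hsumQ : ((typeSeq Q).map w).sum = ((typeSeq Rst).map w).sum := by
      obtain ⟨hQh, hQl, hQc⟩ := hQ
      rw [hx'len, hy'len] at hQl
      have h1 := disp_sum hQc (0, 0) (Option.mem_def.2 hQh)
          (b - a, d - c) (Option.mem_def.2 hQl)
      rw [hsumR]
      simpa using h1
    have hpre1 : typeSeq Q <+: typeSeq Rst → typeSeq Q = typeSeq Rst := fun h =>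
      prefix_eq h hsumQ
    have hpre2 : typeSeq Rst <+: typeSeq Q → typeSeq Q = typeSeq Rst := fun h =>
      (prefix_eq h hsumQ.symm).symm
    rcases hlex Q' hQ'span hceq with heq | hl
    · rw [hT1, hT2] at heq
      have h2 := List.append_cancel_left heq
      have h4 : typeSeq Rst <+: typeSeq Q ++ T₂ := by
        rw [h2]; exact List.prefix_append _ _
      have h3 : typeSeq Q <+: typeSeq Rst ∨ typeSeq Rst <+: typeSeq Q :=
        List.prefix_or_prefix_of_prefix (List.prefix_append (typeSeq Q) T₂) h4
      rcases h3 with h | h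
      · exact Or.inl (hpre1 h)
      · exact Or.inl (hpre2 h)
    · rw [hT1, hT2] at hl
      exact lex_append_reduce hpre1 hpre2 (lex_strip hl)
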